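/- For β ∈ (3,4] and λ = 1/β, the set Λ(λ) = { Σ_{k≥1} i_k λ^k : i_k ∈ {0,1,3} } contains C_{β;013}, with equality if and only if λ = 1/4 (i.e. β = 4). -/

import Mathlib

open Set Filter MeasureTheory Topology

/-- The β-transformation `T_β x = βx - ⌊βx⌋`. -/
noncomputable def betaT (β x : ℝ) : ℝ := Int.fract (β * x)

/-- The `n`-th digit (0-indexed) of the β-expansion of `x ∈ [0,1)`. -/
noncomputable def betaDigit (β x : ℝ) (n : ℕ) : ℕ := ⌊β * (betaT β)^[n] x⌋₊

/-- The digit set `{0, 1, 3}`: `θ 0 = 0`, `θ 1 = 1`, `θ 2 = 3`. -/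
def theta013 : ℕ → ℕ := fun i => if i = 2 then 3 else i

/-- The Cantor-type set `C_{β;θ_0⋯θ_{q-1}}`. -/
noncomputable def betaCantor (β : ℝ) (q : ℕ) (θ : ℕ → ℕ) : Set ℝ :=
  closure {x | x ∈ Set.Ico (0 : ℝ) 1 ∧ ∀ n, ∃ i < q, betaDigit β x n = θ i}

/-- `Λ(λ) = { Σ_{k≥1} i_k λ^k : i_k ∈ {0,1,3} }` (no admissibility restriction). -/
noncomputable def Lambda (lam : ℝ) : Set ℝ :=
  {y | ∃ d : ℕ → ℕ, (∀ k, d k ∈ ({0, 1, 3} : Set ℕ)) ∧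
    y = ∑' k : ℕ, (d k : ℝ) * lam ^ (k + 1)}

/-! ### Auxiliary lemmas -/

/-- Iterates of `betaT` stay in `[0,1)`. -/
lemma betaT_iter_mem (β x : ℝ) (hx : x ∈ Set.Ico (0:ℝ) 1) (n : ℕ) :
    (betaT β)^[n] x ∈ Set.Ico (0:ℝ) 1 := by
  induction n with
  | zero => simpa using hx
  | succ n ih =>
    rw [Function.iterate_succ_apply']
    exact ⟨Int.fract_nonneg _, Int.fract_lt_one _⟩

/-- The fundamental expansion identity for partial sums. -/
lemma betaT_partial (β x : ℝ) (hβ : 0 < β) (hx : x ∈ Set.Ico (0:ℝ) 1) (n : ℕ) :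
    x = (∑ k ∈ Finset.range n, (betaDigit β x k : ℝ) * (1/β) ^ (k+1))
        + (1/β) ^ n * (betaT β)^[n] x := by
  induction n with
  | zero => simp
  | succ n ih =>
    rw [Finset.sum_range_succ]
    have h1 : (0:ℝ) ≤ β * (betaT β)^[n] x :=
      mul_nonneg hβ.le (betaT_iter_mem β x hx n).1
    have hcast : ((betaDigit β x n : ℝ)) = (⌊β * (betaT β)^[n] x⌋ : ℝ) := by
      rw [betaDigit, natCast_floor_eq_intCast_floor h1]
    have hstep : (betaT β)^[n+1] x = β * (betaT β)^[n] x - (betaDigit β x n : ℝ) := by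
      rw [Function.iterate_succ_apply', betaT, Int.fract, hcast]
    rw [hstep]
    nth_rewrite 1 [ih]
    have hβ' : (β:ℝ) ≠ 0 := ne_of_gt hβ
    field_simp
    have hq : (1/β) * β = 1 := by field_simp
    rw [pow_succ]; linear_combination (-(1/β)^n * (betaT β)^[n] x) * hq

/-- The digits `betaDigit` give a `HasSum` representation of `x`. -/
lemma betaDigit_hasSum (β x : ℝ) (hβ : 1 < β) (hx : x ∈ Set.Ico (0:ℝ) 1) :
    HasSum (fun k => (betaDigit β x k : ℝ) * (1/β) ^ (k+1)) x := by
  have hβ0 : (0:ℝ) < β := lt_trans one_pos hβ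
  have hlam0 : (0:ℝ) < 1/β := by positivity
  have hlam1 : (1:ℝ)/β < 1 := by
    rw [div_lt_one hβ0]; exact hβ
  have hbound : ∀ k, (betaDigit β x k : ℝ) * (1/β) ^ (k+1) ≤ β * (1/β) ^ (k+1) := by
    intro k
    have h1 : (0:ℝ) ≤ β * (betaT β)^[k] x := mul_nonneg hβ0.le (betaT_iter_mem β x hx k).1
    have h2 : (betaDigit β x k : ℝ) ≤ β * (betaT β)^[k] x := Nat.floor_le h1
    have h3 : β * (betaT β)^[k] x ≤ β * 1 :=
      mul_le_mul_of_nonneg_left (betaT_iter_mem β x hx k).2.le hβ0.le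
    have := le_trans h2 h3
    rw [mul_one] at this
    exact mul_le_mul_of_nonneg_right this (by positivity)
  have hnonneg : ∀ k, (0:ℝ) ≤ (betaDigit β x k : ℝ) * (1/β) ^ (k+1) := by
    intro k; positivity
  have hsummgeo : Summable (fun k : ℕ => β * (1/β) ^ (k+1)) := by
    have : Summable (fun k : ℕ => (1/β) ^ k) :=
      summable_geometric_of_lt_one hlam0.le hlam1
    exact ((this.mul_left ((1/β))).mul_left β).congr (fun k => by ring)
  have hsumm : Summable (fun k => (betaDigit β x k : ℝ) * (1/β) ^ (k+1)) :=
    Summable.of_nonneg_of_le hnonneg hbound hsummgeo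
  rw [hsumm.hasSum_iff_tendsto_nat]
  have hid : ∀ n, (∑ k ∈ Finset.range n, (betaDigit β x k : ℝ) * (1/β) ^ (k+1))
      = x - (1/β) ^ n * (betaT β)^[n] x := by
    intro n
    have := betaT_partial β x hβ0 hx n
    linarith
  simp only [hid]
  have htail : Tendsto (fun n : ℕ => (1/β) ^ n * (betaT β)^[n] x) atTop (𝓝 0) := by
    apply squeeze_zero (fun n => mul_nonneg (by positivity) (betaT_iter_mem β x hx n).1)
      (fun n => ?_) (tendsto_pow_atTop_nhds_zero_of_lt_one hlam0.le hlam1)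
    calc (1/β) ^ n * (betaT β)^[n] x ≤ (1/β) ^ n * 1 :=
          mul_le_mul_of_nonneg_left (betaT_iter_mem β x hx n).2.le (by positivity)
      _ = (1/β) ^ n := mul_one _
  have := Tendsto.sub (tendsto_const_nhds (x := x)) htail
  simpa using this

/-- `Λ(λ)` is closed when `0 < λ < 1`. -/
lemma isClosed_Lambda (lam : ℝ) (h0 : 0 < lam) (h1 : lam < 1) : IsClosed (Lambda lam) := by
  set K : Set (ℕ → ℕ) := Set.univ.pi (fun _ => ({0, 1, 3} : Set ℕ)) with hK
  set F : (ℕ → ℕ) → ℝ := fun d => ∑' k, ((min (d k) 3 : ℕ) : ℝ) * lam ^ (k+1) with hF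
  have hcont : Continuous F := by
    apply continuous_tsum (u := fun k : ℕ => 3 * lam ^ (k+1))
    · intro k
      have h1 : Continuous (fun d : ℕ → ℕ => d k) := continuous_apply k
      have h2 : Continuous (fun n : ℕ => ((min n 3 : ℕ) : ℝ) * lam ^ (k+1)) :=
        continuous_of_discreteTopology
      exact h2.comp h1
    · have : Summable (fun k : ℕ => lam ^ k) := summable_geometric_of_lt_one h0.le h1
      exact ((this.mul_left lam).mul_left 3).congr (fun k => by ring)
    · intro k d
      rw [Real.norm_eq_abs, abs_of_nonneg (by positivity)]
      have : ((min (d k) 3 : ℕ) : ℝ) ≤ 3 := by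
        have := min_le_right (d k) 3
        exact_mod_cast this
      exact mul_le_mul_of_nonneg_right this (by positivity)
  have hKcomp : IsCompact K :=
    isCompact_univ_pi (fun _ => (Set.toFinite _).isCompact)
  have himg : Lambda lam = F '' K := by
    ext y
    constructor
    · rintro ⟨d, hd, rfl⟩
      refine ⟨d, fun k _ => hd k, ?_⟩
      apply tsum_congr
      intro k
      have : min (d k) 3 = d k := by
        have := hd k
        simp only [Set.mem_insert_iff, Set.mem_singleton_iff] at this
        rcases this with h | h | h <;> simp [h]
      rw [this]
    · rintro ⟨d, hd, rfl⟩
      refine ⟨fun k => min (d k) 3, fun k => ?_, rfl⟩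
      have := hd k (Set.mem_univ k)
      simp only [Set.mem_insert_iff, Set.mem_singleton_iff] at this ⊢
      rcases this with h | h | h <;> simp [h]
  rw [himg]
  exact (hKcomp.image hcont).isClosed

/-- Partial sums of a base-4 expansion with digits `e`. -/
noncomputable def partS (e : ℕ → ℕ) (M : ℕ) : ℝ :=
  ∑ k ∈ Finset.range M, (e k : ℝ) * (1/4) ^ (k+1)

lemma partS_nonneg (e : ℕ → ℕ) (M : ℕ) : 0 ≤ partS e M := by
  apply Finset.sum_nonneg; intro k _; positivity

lemma partS_succ (e : ℕ → ℕ) (M : ℕ) :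
    partS e (M+1) = ((e 0 : ℝ) + partS (fun k => e (k+1)) M) / 4 := by
  rw [partS, Finset.sum_range_succ', partS]
  have h : ∀ k ∈ Finset.range M, ((e (k+1) : ℝ)) * (1/4) ^ (k+1+1)
      = (((e (k+1) : ℝ)) * (1/4) ^ (k+1)) / 4 := by
    intro k _
    rw [pow_succ]; ring
  rw [Finset.sum_congr rfl h, ← Finset.sum_div]
  ring

lemma partS_le (e : ℕ → ℕ) (he : ∀ k, e k ≤ 3) (M : ℕ) :
    partS e M ≤ 1 - (1/4) ^ M := by
  induction M generalizing e with
  | zero => simp [partS]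
  | succ M ih =>
    rw [partS_succ]
    have h0 : (e 0 : ℝ) ≤ 3 := by exact_mod_cast he 0
    have h1 := ih (fun k => e (k+1)) (fun k => he (k+1))
    have : (1:ℝ)/4 ^ (M+1) = (1/4^M)/4 := by rw [pow_succ]; ring
    rw [pow_succ]
    rw [div_le_iff₀ (by norm_num : (0:ℝ) < 4)] at *
    nlinarith [pow_nonneg (by norm_num : (0:ℝ) ≤ 1/4) M]

lemma partS_lt_one (e : ℕ → ℕ) (he : ∀ k, e k ≤ 3) (M : ℕ) : partS e M < 1 := by
  have := partS_le e he M
  have : (0:ℝ) < (1/4)^M := by positivity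
  have := partS_le e he M
  linarith

lemma betaT_partS (e : ℕ → ℕ) (he : ∀ k, e k ≤ 3) (M : ℕ) :
    betaT 4 (partS e M) = partS (fun k => e (k+1)) (M - 1) := by
  cases M with
  | zero => simp [betaT, partS]
  | succ M =>
    have hy0 := partS_nonneg (fun k => e (k+1)) M
    have hy1 := partS_lt_one (fun k => e (k+1)) (fun k => he (k+1)) M
    have h4 : (4:ℝ) * partS e (M+1) = (e 0 : ℝ) + partS (fun k => e (k+1)) M := by
      rw [partS_succ]; ring
    rw [betaT, h4]
    simp only [Nat.add_sub_cancel]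
    rw [show ((e 0 : ℝ)) = ((e 0 : ℤ) : ℝ) by push_cast; ring, Int.fract_intCast_add]
    exact Int.fract_eq_self.mpr ⟨hy0, hy1⟩

lemma betaT_iter_partS (e : ℕ → ℕ) (he : ∀ k, e k ≤ 3) (M n : ℕ) :
    (betaT 4)^[n] (partS e M) = partS (fun k => e (n + k)) (M - n) := by
  induction n generalizing e M with
  | zero => simp
  | succ n ih =>
    rw [Function.iterate_succ_apply, betaT_partS e he M,
      ih (fun k => e (k+1)) (fun k => he (k+1)) (M-1)]
    have h1 : M - 1 - n = M - (n+1) := by omega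
    rw [h1]
    congr 1
    funext k
    congr 1
    omega

lemma betaDigit_partS (e : ℕ → ℕ) (he : ∀ k, e k ≤ 3) (M n : ℕ) :
    betaDigit 4 (partS e M) n = if n < M then e n else 0 := by
  rw [betaDigit, betaT_iter_partS e he M n]
  by_cases h : n < M
  · have hM : M - n = (M - n - 1) + 1 := by omega
    rw [hM, if_pos h]
    set e' : ℕ → ℕ := fun k => e (n + k) with he'
    have h4 : (4:ℝ) * partS e' (M - n - 1 + 1)
        = (e' 0 : ℝ) + partS (fun k => e' (k+1)) (M - n - 1) := by
      rw [partS_succ]; ring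
    rw [h4]
    have hy0 := partS_nonneg (fun k => e' (k+1)) (M - n - 1)
    have hy1 := partS_lt_one (fun k => e' (k+1)) (fun k => he _) (M - n - 1)
    rw [add_comm, Nat.floor_add_natCast hy0, Nat.floor_eq_zero.mpr hy1]
    simp [he']
  · rw [if_neg h]
    have hMn : M - n = 0 := by omega
    rw [hMn]
    simp [partS]

/-- Any digit sequence valued in `{0,1,3}` gives a finite truncation lying in the
defining set of `betaCantor 4 3 theta013`. -/
lemma partS_mem_preset (d : ℕ → ℕ) (hd : ∀ k, d k ∈ ({0, 1, 3} : Set ℕ)) (N : ℕ) :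
    partS d N ∈ {x : ℝ | x ∈ Set.Ico (0 : ℝ) 1 ∧ ∀ n, ∃ i < 3, betaDigit 4 x n = theta013 i} := by
  have he : ∀ k, d k ≤ 3 := by
    intro k
    rcases hd k with h | h | h <;> simp_all
  refine ⟨⟨partS_nonneg d N, partS_lt_one d he N⟩, ?_⟩
  intro n
  rw [betaDigit_partS d he N n]
  by_cases h : n < N
  · rw [if_pos h]
    rcases hd n with h' | h' | h'
    · exact ⟨0, by norm_num, by simp [theta013, h']⟩
    · exact ⟨1, by norm_num, by simp_all [theta013]⟩
    · exact ⟨2, by norm_num, by simp_all [theta013]⟩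
  · exact ⟨0, by norm_num, by simp [theta013, if_neg h]⟩

/-- For `β ∈ (3,4]` and `λ = 1/β`, `Λ(λ) ⊇ C_{β;013}`, with equality if and only if
`λ = 1/4`, i.e. `β = 4`. -/
theorem stmt19 (β : ℝ) (hβ : β ∈ Set.Ioc (3 : ℝ) 4) :
    betaCantor β 3 theta013 ⊆ Lambda (1 / β) ∧
      (betaCantor β 3 theta013 = Lambda (1 / β) ↔ β = 4) := by
  obtain ⟨hβ3, hβ4⟩ := hβ
  have hβ0 : (0:ℝ) < β := by linarith
  have hβ1 : (1:ℝ) < β := by linarith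
  have hlam0 : (0:ℝ) < 1/β := by positivity
  have hlam1 : (1:ℝ)/β < 1 := by rw [div_lt_one hβ0]; linarith
  -- the inclusion
  have hsub : betaCantor β 3 theta013 ⊆ Lambda (1 / β) := by
    apply closure_minimal ?_ (isClosed_Lambda (1/β) hlam0 hlam1)
    rintro x ⟨hx, hdig⟩
    refine ⟨betaDigit β x, ?_, ?_⟩
    · intro k
      obtain ⟨i, hi, hik⟩ := hdig k
      interval_cases i <;> simp_all [theta013]
    · exact ((betaDigit_hasSum β x hβ1 hx).tsum_eq).symm
  refine ⟨hsub, ?_, ?_⟩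
  · -- equality → β = 4
    intro heq
    by_contra hne
    have hβlt : β < 4 := lt_of_le_of_ne hβ4 hne
    -- the point `3/(β-1)` lies in Λ but is > 1
    have hy : (3:ℝ)/(β-1) ∈ Lambda (1/β) := by
      refine ⟨fun _ => 3, fun k => by simp, ?_⟩
      have hgeo : ∑' k : ℕ, (1/β) ^ k = (1 - 1/β)⁻¹ :=
        tsum_geometric_of_lt_one hlam0.le hlam1
      have : ∑' k : ℕ, ((3:ℕ) : ℝ) * (1/β) ^ (k+1)
          = (3 * (1/β)) * ∑' k : ℕ, (1/β) ^ k := by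
        rw [← tsum_mul_left]
        apply tsum_congr; intro k; push_cast; ring
      rw [this, hgeo]
      have hb1 : β - 1 ≠ 0 := by intro h; rw [sub_eq_zero] at h; linarith
      have hb : (β:ℝ) ≠ 0 := ne_of_gt hβ0
      field_simp
    have hmem : (3:ℝ)/(β-1) ∈ betaCantor β 3 theta013 := by rw [heq]; exact hy
    have hle : (3:ℝ)/(β-1) ≤ 1 := by
      have hIcc : betaCantor β 3 theta013 ⊆ Set.Icc (0:ℝ) 1 := by
        apply closure_minimal ?_ isClosed_Icc
        rintro x ⟨hx, -⟩
        exact ⟨hx.1, hx.2.le⟩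
      exact (hIcc hmem).2
    have : (1:ℝ) < 3/(β-1) := by
      rw [lt_div_iff₀ (by linarith : (0:ℝ) < β - 1)]
      linarith
    linarith
  · -- β = 4 → equality
    intro h4
    subst h4
    apply Set.Subset.antisymm hsub
    rintro y ⟨d, hd, rfl⟩
    have he : ∀ k, d k ≤ 3 := by
      intro k
      rcases hd k with h | h | h <;> simp_all
    have hsumm : Summable (fun k => (d k : ℝ) * (1/4) ^ (k+1)) := by
      have hg : Summable (fun k : ℕ => 3 * (1/4 : ℝ) ^ (k+1)) := by
        have : Summable (fun k : ℕ => (1/4 : ℝ) ^ k) :=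
          summable_geometric_of_lt_one (by norm_num) (by norm_num)
        exact ((this.mul_left (1/4)).mul_left 3).congr (fun k => by ring)
      apply Summable.of_nonneg_of_le (fun k => by positivity) (fun k => ?_) hg
      have : ((d k : ℝ)) ≤ 3 := by exact_mod_cast he k
      exact mul_le_mul_of_nonneg_right this (by positivity)
    have hten : Tendsto (fun N => partS d N) atTop
        (𝓝 (∑' k : ℕ, (d k : ℝ) * (1/(4:ℝ)) ^ (k + 1))) := by
      have := hsumm.hasSum.tendsto_sum_nat
      exact this
    have : (∑' k : ℕ, (d k : ℝ) * (1/(4:ℝ)) ^ (k + 1)) ∈ betaCantor 4 3 theta013 :=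
      mem_closure_of_tendsto hten (Filter.Eventually.of_forall (fun N => partS_mem_preset d hd N))
    exact this
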